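/- Consider the points p_{a,b} = (a, b, a² − b²) ∈ ℝ³ for integers a, b. For every pair of integers (a,b), the four points p_{a,b}, p_{a+1,b}, p_{a,b+1}, p_{a+1,b+1} are coplanar and form a parallelogram, and no two of these parallelograms (for distinct (a,b)) are coplanar. -/

import Mathlib

/-- The lattice points on the saddle surface `z = x² − y²`. -/
noncomputable def saddle (a b : ℤ) : EuclideanSpace ℝ (Fin 3) :=
  WithLp.toLp 2 ![(a : ℝ), (b : ℝ), (a : ℝ) ^ 2 - (b : ℝ) ^ 2]

lemma saddle_sub (a b c d : ℤ) :
    saddle c d - saddle a b =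
      (WithLp.toLp 2 ![(c : ℝ) - a, (d : ℝ) - b, ((c : ℝ) ^ 2 - d ^ 2) - (a ^ 2 - b ^ 2)] :
        EuclideanSpace ℝ (Fin 3)) := by
  ext i
  fin_cases i <;> simp [saddle, PiLp.sub_apply] <;> ring

lemma indep3 (s t u v w : ℝ) (h : w ≠ u * s + v * t) :
    LinearIndependent ℝ
      ![(WithLp.toLp 2 ![1, 0, s] : EuclideanSpace ℝ (Fin 3)), WithLp.toLp 2 ![0, 1, t], WithLp.toLp 2 ![u, v, w]] := by
  rw [Fintype.linearIndependent_iff]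
  intro g hg
  rw [Fin.sum_univ_three] at hg
  have e0 := congrArg (fun v => v 0) hg
  have e1 := congrArg (fun v => v 1) hg
  have e2 := congrArg (fun v => v 2) hg
  simp [PiLp.add_apply, PiLp.smul_apply] at e0 e1 e2
  have hg2 : g 2 = 0 := by
    rcases eq_or_ne (g 2) 0 with h2 | h2
    · exact h2
    · exfalso
      apply h
      have : g 2 * (w - (u * s + v * t)) = 0 := by
        linear_combination e2 - s * e0 - t * e1
      have := mul_eq_zero.mp this
      rcases this with h' | h'
      · exact absurd h' h2
      · linarith
  have hg0 : g 0 = 0 := by rw [hg2] at e0; linarith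
  have hg1 : g 1 = 0 := by rw [hg2] at e1; linarith
  intro i
  fin_cases i <;> assumption

lemma indep2 (s t : ℝ) :
    LinearIndependent ℝ
      ![(WithLp.toLp 2 ![1, 0, s] : EuclideanSpace ℝ (Fin 3)), WithLp.toLp 2 ![0, 1, t]] := by
  rw [Fintype.linearIndependent_iff]
  intro g hg
  rw [Fin.sum_univ_two] at hg
  have e0 := congrArg (fun v => v 0) hg
  have e1 := congrArg (fun v => v 1) hg
  simp [PiLp.add_apply, PiLp.smul_apply] at e0 e1
  intro i
  fin_cases i <;> assumption

lemma rank_lower {S : Set (EuclideanSpace ℝ (Fin 3))} {n : ℕ}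
    {w : Fin n → EuclideanSpace ℝ (Fin 3)}
    (hmem : ∀ i, w i ∈ vectorSpan ℝ S) (hind : LinearIndependent ℝ w) :
    n ≤ Module.finrank ℝ (vectorSpan ℝ S) := by
  have hle : Submodule.span ℝ (Set.range w) ≤ vectorSpan ℝ S := by
    rw [Submodule.span_le]
    rintro x ⟨i, rfl⟩
    exact hmem i
  have := Submodule.finrank_mono hle
  rwa [finrank_span_eq_card hind, Fintype.card_fin] at this

/-- For every `(a,b) ∈ ℤ²` the four saddle points `p_{a,b}, p_{a+1,b},
`p_{a,b+1}, p_{a+1,b+1}` are coplanar and form a (nondegenerate)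
parallelogram, and no two of these parallelograms are coplanar. -/
theorem saddle_parallelograms :
    (∀ a b : ℤ,
      saddle a b + saddle (a + 1) (b + 1) = saddle (a + 1) b + saddle a (b + 1) ∧
      ¬ Collinear ℝ ({saddle a b, saddle (a + 1) b, saddle a (b + 1)} :
        Set (EuclideanSpace ℝ (Fin 3))) ∧
      Coplanar ℝ ({saddle a b, saddle (a + 1) b, saddle a (b + 1),
        saddle (a + 1) (b + 1)} : Set (EuclideanSpace ℝ (Fin 3)))) ∧
    (∀ a b a' b' : ℤ, (a, b) ≠ (a', b') →
      ¬ Coplanar ℝ (({saddle a b, saddle (a + 1) b, saddle a (b + 1),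
          saddle (a + 1) (b + 1)} ∪
        {saddle a' b', saddle (a' + 1) b', saddle a' (b' + 1),
          saddle (a' + 1) (b' + 1)}) : Set (EuclideanSpace ℝ (Fin 3)))) := by
  have hw1 : ∀ a b : ℤ, saddle (a + 1) b - saddle a b =
      (WithLp.toLp 2 ![1, 0, 2 * (a : ℝ) + 1] : EuclideanSpace ℝ (Fin 3)) := by
    intro a b
    rw [saddle_sub]
    ext i
    fin_cases i <;> push_cast <;> simp <;> ring
  have hw2 : ∀ a b : ℤ, saddle a (b + 1) - saddle a b =
      (WithLp.toLp 2 ![0, 1, -(2 * (b : ℝ) + 1)] : EuclideanSpace ℝ (Fin 3)) := by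
    intro a b
    rw [saddle_sub]
    ext i
    fin_cases i <;> push_cast <;> simp <;> ring
  constructor
  · intro a b
    refine ⟨?_, ?_, ?_⟩
    · ext i
      fin_cases i <;> simp [saddle, PiLp.add_apply] <;> push_cast <;> ring
    · intro hcol
      have h1 : Module.finrank ℝ (vectorSpan ℝ
          ({saddle a b, saddle (a + 1) b, saddle a (b + 1)} :
            Set (EuclideanSpace ℝ (Fin 3)))) ≤ 1 := hcol.finrank_le_one
      have h2 := rank_lower (S := ({saddle a b, saddle (a + 1) b, saddle a (b + 1)} :
          Set (EuclideanSpace ℝ (Fin 3))))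
        (w := ![(WithLp.toLp 2 ![1, 0, 2 * (a : ℝ) + 1] : EuclideanSpace ℝ (Fin 3)),
          WithLp.toLp 2 ![0, 1, -(2 * (b : ℝ) + 1)]]) ?_ (indep2 _ _)
      · omega
      · intro i
        fin_cases i
        · rw [← hw1 a b]
          exact vsub_mem_vectorSpan ℝ (by simp) (by simp)
        · rw [← hw2 a b]
          exact vsub_mem_vectorSpan ℝ (by simp) (by simp)
    · have hset : ({saddle a b, saddle (a + 1) b, saddle a (b + 1),
          saddle (a + 1) (b + 1)} : Set (EuclideanSpace ℝ (Fin 3))) =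
          insert (saddle (a + 1) (b + 1))
            ({saddle a b, saddle (a + 1) b, saddle a (b + 1)} :
              Set (EuclideanSpace ℝ (Fin 3))) := by
        ext x; simp; tauto
      have hmem : saddle (a + 1) (b + 1) ∈ affineSpan ℝ
          ({saddle a b, saddle (a + 1) b, saddle a (b + 1)} :
            Set (EuclideanSpace ℝ (Fin 3))) := by
        have heq : saddle (a + 1) (b + 1) =
            (saddle (a + 1) b -ᵥ saddle a b) +ᵥ saddle a (b + 1) := by
          ext i
          fin_cases i <;> simp [saddle, PiLp.add_apply, PiLp.sub_apply] <;>
            push_cast <;> ring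
        rw [heq]
        refine AffineSubspace.vadd_mem_of_mem_direction ?_
          (mem_affineSpan ℝ (by simp))
        rw [direction_affineSpan]
        exact vsub_mem_vectorSpan ℝ (by simp) (by simp)
      rw [hset, coplanar_insert_iff_of_mem_affineSpan hmem]
      exact coplanar_triple ℝ _ _ _
  · intro a b a' b' hne hcop
    -- find a point (c, d) of the second parallelogram off the plane of the first
    obtain ⟨c, d, hcd, hdev⟩ : ∃ c d : ℤ,
        (saddle c d ∈ ({saddle a' b', saddle (a' + 1) b', saddle a' (b' + 1),
          saddle (a' + 1) (b' + 1)} : Set (EuclideanSpace ℝ (Fin 3)))) ∧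
        (c - a) * (c - a - 1) ≠ (d - b) * (d - b - 1) := by
      rcases eq_or_ne ((a' - a) * (a' - a - 1)) ((b' - b) * (b' - b - 1)) with heq | hne'
      · rcases eq_or_ne a a' with rfl | ha
        · have hb : b ≠ b' := by
            intro h; exact hne (by rw [h])
          refine ⟨a, b' + 1, by simp, ?_⟩
          intro h
          have h2 : 2 * (b' - b) = 0 := by linear_combination heq - h
          omega
        · refine ⟨a' + 1, b', by simp, ?_⟩
          intro h
          have h2 : 2 * (a' - a) = 0 := by linear_combination h - heq
          omega
      · exact ⟨a', b', by simp, hne'⟩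
    set S := (({saddle a b, saddle (a + 1) b, saddle a (b + 1),
          saddle (a + 1) (b + 1)} ∪
        {saddle a' b', saddle (a' + 1) b', saddle a' (b' + 1),
          saddle (a' + 1) (b' + 1)}) : Set (EuclideanSpace ℝ (Fin 3))) with hS
    have h2 : Module.finrank ℝ (vectorSpan ℝ S) ≤ 2 := hcop.finrank_le_two
    have h3 := rank_lower (S := S)
      (w := ![(WithLp.toLp 2 ![1, 0, 2 * (a : ℝ) + 1] : EuclideanSpace ℝ (Fin 3)),
        WithLp.toLp 2 ![0, 1, -(2 * (b : ℝ) + 1)],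
        WithLp.toLp 2 ![(c : ℝ) - a, (d : ℝ) - b, ((c : ℝ) ^ 2 - d ^ 2) - (a ^ 2 - b ^ 2)]])
      ?_ ?_
    · omega
    · intro i
      have habS : saddle a b ∈ S := by rw [hS]; left; simp
      fin_cases i
      · rw [← hw1 a b]
        exact vsub_mem_vectorSpan ℝ (by rw [hS]; left; simp) habS
      · rw [← hw2 a b]
        exact vsub_mem_vectorSpan ℝ (by rw [hS]; left; simp) habS
      · rw [← saddle_sub]
        exact vsub_mem_vectorSpan ℝ (by rw [hS]; right; exact hcd) habS
    · apply indep3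
      intro h
      apply hdev
      have : ((c : ℝ) - a) * ((c : ℝ) - a - 1) = ((d : ℝ) - b) * ((d : ℝ) - b - 1) := by
        linear_combination h
      exact_mod_cast this
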